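/- (Gentle operator lemma) If ρ is a subnormalized density operator (ρ ≥ 0, Tr ρ ≤ 1) and Λ is an operator with 0 ≤ Λ ≤ I satisfying Tr(ρΛ) ≥ 1 − λ, then ‖ρ − √Λ ρ √Λ‖₁ ≤ √(8λ). -/

import Mathlib

open Matrix Kronecker BigOperators ComplexOrder

/-- The positive semidefinite square root (as in the older Mathlib's `Matrix.PosSemidef.sqrt`). -/
noncomputable def Matrix.PosSemidef.sqrt {n 𝕜 : Type*} [Fintype n] [RCLike 𝕜] [DecidableEq n]
    {A : Matrix n n 𝕜} (hA : A.PosSemidef) : Matrix n n 𝕜 :=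
  hA.1.eigenvectorUnitary.1 * diagonal ((↑) ∘ (√·) ∘ hA.1.eigenvalues) *
    (star hA.1.eigenvectorUnitary : Matrix n n 𝕜)

namespace GentleSqrt

open scoped MatrixOrder

lemma sqrt_eq_cfc' {n : Type*} [Fintype n] [DecidableEq n] {A : Matrix n n ℂ}
    (hA : A.PosSemidef) : hA.sqrt = CFC.sqrt A := by
  rw [CFC.sqrt_eq_cfc, cfc_nnreal_eq_real _ A, hA.1.cfc_eq]
  simp only [IsHermitian.cfc, Matrix.PosSemidef.sqrt]
  congr 2
  congr 1
  funext i
  simp [max_eq_left (hA.eigenvalues_nonneg i)]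

end GentleSqrt

namespace Matrix.PosSemidef

open scoped MatrixOrder

lemma posSemidef_sqrt {n : Type*} [Fintype n] [DecidableEq n] {A : Matrix n n ℂ}
    (hA : A.PosSemidef) : hA.sqrt.PosSemidef := by
  rw [GentleSqrt.sqrt_eq_cfc']
  exact (CFC.sqrt_nonneg A).posSemidef

lemma sqrt_mul_self {n : Type*} [Fintype n] [DecidableEq n] {A : Matrix n n ℂ}
    (hA : A.PosSemidef) : hA.sqrt * hA.sqrt = A := by
  rw [GentleSqrt.sqrt_eq_cfc']
  exact CFC.sqrt_mul_sqrt_self A hA.nonneg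

lemma eq_sqrt_of_sq_eq {n : Type*} [Fintype n] [DecidableEq n] {B : Matrix n n ℂ}
    (hB : B.PosSemidef) {A : Matrix n n ℂ} (hA : A.PosSemidef) (h : B ^ 2 = A) :
    B = hA.sqrt := by
  rw [GentleSqrt.sqrt_eq_cfc']
  exact (CFC.sqrt_unique (by rw [← sq]; exact h) hB.nonneg).symm

end Matrix.PosSemidef

/-- Trace norm `‖A‖₁ = Tr √(Aᴴ A)`. -/
noncomputable def traceNorm {n : Type*} [Fintype n] [DecidableEq n]
    (A : Matrix n n ℂ) : ℝ :=
  ((Matrix.posSemidef_conjTranspose_mul_self A).sqrt.trace).re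

/-- Von Neumann entropy (base 2), via eigenvalues; `0` for non-Hermitian input. -/
noncomputable def vnEntropy {n : Type*} [Fintype n] [DecidableEq n]
    (ρ : Matrix n n ℂ) : ℝ :=
  if h : ρ.IsHermitian then
    -∑ i, (h.eigenvalues i) * Real.logb 2 (h.eigenvalues i)
  else 0

/-- A density operator: positive semidefinite with unit trace. -/
def IsDensity {n : Type*} [Fintype n] (ρ : Matrix n n ℂ) : Prop :=
  ρ.PosSemidef ∧ ρ.trace = 1

/-- Rank-one projector `|v⟩⟨v|`. -/
noncomputable def proj {n : Type*} (v : n → ℂ) : Matrix n n ℂ :=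
  Matrix.vecMulVec v (star v)

/-- Partial trace over the second tensor factor. -/
noncomputable def ptraceSnd {a b : Type*} [Fintype b]
    (ρ : Matrix (a × b) (a × b) ℂ) : Matrix a a ℂ :=
  Matrix.of fun i j => ∑ k, ρ (i, k) (j, k)

/-- Partial trace over the first tensor factor. -/
noncomputable def ptraceFst {a b : Type*} [Fintype a]
    (ρ : Matrix (a × b) (a × b) ℂ) : Matrix b b ℂ :=
  Matrix.of fun i j => ∑ k, ρ (k, i) (k, j)

/-- Quantum mutual information `I(A;B) = H(A) + H(B) − H(AB)`. -/
noncomputable def mutualInfo {a b : Type*} [Fintype a] [Fintype b]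
    [DecidableEq a] [DecidableEq b] (ρ : Matrix (a × b) (a × b) ℂ) : ℝ :=
  vnEntropy (ptraceSnd ρ) + vnEntropy (ptraceFst ρ) - vnEntropy ρ

/-- `n`-fold tensor power of a matrix. -/
noncomputable def tpow {d : ℕ} (ρ : Matrix (Fin d) (Fin d) ℂ) (n : ℕ) :
    Matrix (Fin n → Fin d) (Fin n → Fin d) ℂ :=
  Matrix.of fun f g => ∏ i, ρ (f i) (g i)

/-- The cq state obtained by measuring the `A` part of a bipartite state with POVM `Λ`:
`ρ^{XB} = Σ_x |x⟩⟨x| ⊗ Tr_A((Λ_x ⊗ I)ρ)`. -/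
noncomputable def measureA {a b m : Type*} [Fintype a] [DecidableEq m]
    (Λ : m → Matrix a a ℂ) (ρ : Matrix (a × b) (a × b) ℂ) :
    Matrix (m × b) (m × b) ℂ :=
  Matrix.of fun xi yj =>
    if xi.1 = yj.1 then ∑ k, ∑ l, (Λ xi.1) k l * ρ (l, xi.2) (k, yj.2) else 0

/-- Unitarity for (possibly rectangular between index types) matrices. -/
def IsUnitaryMat {p q : Type*} [Fintype p] [Fintype q] [DecidableEq p] [DecidableEq q]
    (U : Matrix p q ℂ) : Prop :=
  U * Uᴴ = 1 ∧ Uᴴ * U = 1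

namespace GentleAux

variable {n : Type*} [Fintype n] [DecidableEq n]

noncomputable def toE (C : Matrix n n ℂ) : EuclideanSpace ℂ (n × n) :=
  WithLp.toLp 2 (fun p : n × n => C p.2 p.1)

set_option linter.unusedSectionVars false

lemma trace_form (A B : Matrix n n ℂ) :
    (Aᴴ * B).trace = ∑ p : n × n, (starRingEnd ℂ) (A p.2 p.1) * B p.2 p.1 := by
  rw [Matrix.trace, Fintype.sum_prod_type]
  simp [Matrix.mul_apply, Matrix.diag, Matrix.conjTranspose_apply]

lemma trace_inner (C D : Matrix n n ℂ) :
    (Cᴴ * D).trace = inner (𝕜 := ℂ) (toE C) (toE D) := by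
  rw [trace_form, PiLp.inner_apply]
  simp [RCLike.inner_apply, toE, mul_comm]

lemma trace_CS (A B : Matrix n n ℂ) :
    ((Aᴴ * B).trace).re ≤
      Real.sqrt ((Aᴴ * A).trace).re * Real.sqrt ((Bᴴ * B).trace).re := by
  have hx : Real.sqrt ((Aᴴ * A).trace).re = ‖toE A‖ := by
    rw [trace_inner A A, inner_self_eq_norm_sq_to_K (𝕜 := ℂ)]
    norm_cast
    exact Real.sqrt_sq (norm_nonneg _)
  have hy : Real.sqrt ((Bᴴ * B).trace).re = ‖toE B‖ := by
    rw [trace_inner B B, inner_self_eq_norm_sq_to_K (𝕜 := ℂ)]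
    norm_cast
    exact Real.sqrt_sq (norm_nonneg _)
  rw [hx, hy, trace_inner A B]
  calc (inner (𝕜 := ℂ) (toE A) (toE B)).re ≤ ‖(inner (𝕜 := ℂ) (toE A) (toE B))‖ :=
        Complex.re_le_norm _
    _ ≤ ‖toE A‖ * ‖toE B‖ := norm_inner_le_norm _ _

lemma trace_re_nonneg {M : Matrix n n ℂ} (hM : M.PosSemidef) : 0 ≤ M.trace.re := by
  rw [Matrix.trace, Complex.re_sum]
  refine Finset.sum_nonneg fun i _ => ?_
  have := hM.re_dotProduct_nonneg (Pi.single i 1)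
  simpa [Matrix.diag, Matrix.mulVec_single, dotProduct, Pi.single_apply,
    Finset.sum_ite_eq] using this

lemma trace_mul_re_nonneg {A B : Matrix n n ℂ} (hA : A.PosSemidef) (hB : B.PosSemidef) :
    0 ≤ ((A * B).trace).re := by
  have h1 : A * B = hA.sqrt * (hA.sqrt * B) := by
    rw [← Matrix.mul_assoc, hA.sqrt_mul_self]
  rw [h1, Matrix.trace_mul_comm]
  have h2 : (hA.sqrt * B) * hA.sqrt = hA.sqrt * B * hA.sqrtᴴ := by
    rw [hA.posSemidef_sqrt.1]
  rw [h2]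
  exact trace_re_nonneg (hB.mul_mul_conjTranspose_same hA.sqrt)

lemma conj_mul_conj (W : Matrix n n ℂ) (hW : Wᴴ * W = 1) (a b : n → ℂ) :
    (W * Matrix.diagonal a * Wᴴ) * (W * Matrix.diagonal b * Wᴴ)
      = W * Matrix.diagonal (fun i => a i * b i) * Wᴴ := by
  have h : Wᴴ * (W * (Matrix.diagonal b * Wᴴ)) = Matrix.diagonal b * Wᴴ := by
    rw [← Matrix.mul_assoc, hW, Matrix.one_mul]
  have hd : Matrix.diagonal a * Matrix.diagonal b = Matrix.diagonal (fun i => a i * b i) := by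
    rw [Matrix.diagonal_mul_diagonal]
  calc (W * Matrix.diagonal a * Wᴴ) * (W * Matrix.diagonal b * Wᴴ)
      = W * (Matrix.diagonal a * (Wᴴ * (W * (Matrix.diagonal b * Wᴴ)))) := by
        simp only [Matrix.mul_assoc]
    _ = W * (Matrix.diagonal a * (Matrix.diagonal b * Wᴴ)) := by rw [h]
    _ = W * ((Matrix.diagonal a * Matrix.diagonal b) * Wᴴ) := by
        rw [← Matrix.mul_assoc (Matrix.diagonal a) (Matrix.diagonal b) Wᴴ]
    _ = W * Matrix.diagonal (fun i => a i * b i) * Wᴴ := by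
        rw [hd, ← Matrix.mul_assoc]

lemma trace_conj (W : Matrix n n ℂ) (hW : Wᴴ * W = 1) (a : n → ℂ) :
    (W * Matrix.diagonal a * Wᴴ).trace = ∑ i, a i := by
  rw [Matrix.trace_mul_comm, ← Matrix.mul_assoc, hW, Matrix.one_mul, Matrix.trace_diagonal]

lemma conj_sub (W D1 D2 : Matrix n n ℂ) :
    W * D1 * Wᴴ - W * D2 * Wᴴ = W * (D1 - D2) * Wᴴ := by noncomm_ring

/-- For Hermitian `X` there is a unitary `U` with `traceNorm X ≤ Re Tr (U X)`. -/
lemma traceNorm_le_sign {X : Matrix n n ℂ} (hX : X.IsHermitian) :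
    ∃ U : Matrix n n ℂ, U * Uᴴ = 1 ∧ Uᴴ * U = 1 ∧ traceNorm X ≤ ((U * X).trace).re := by
  classical
  set W : Matrix n n ℂ := (hX.eigenvectorUnitary : Matrix n n ℂ) with hWdef
  set e : n → ℝ := hX.eigenvalues with hedef
  have hW1 : Wᴴ * W = 1 := by
    rw [← Matrix.star_eq_conjTranspose]
    exact (Matrix.mem_unitaryGroup_iff').mp hX.eigenvectorUnitary.2
  have hW2 : W * Wᴴ = 1 := by
    rw [← Matrix.star_eq_conjTranspose]
    exact (Matrix.mem_unitaryGroup_iff).mp hX.eigenvectorUnitary.2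
  have hXspec : X = W * Matrix.diagonal (fun i => (e i : ℂ)) * Wᴴ := by
    rw [← Matrix.star_eq_conjTranspose]
    exact hX.spectral_theorem
  set s : n → ℂ := fun i => if 0 ≤ e i then 1 else -1 with hsdef
  set U : Matrix n n ℂ := W * Matrix.diagonal s * Wᴴ with hUdef
  have hUH : Uᴴ = U := by
    rw [hUdef, Matrix.conjTranspose_mul, Matrix.conjTranspose_mul,
      Matrix.conjTranspose_conjTranspose, Matrix.diagonal_conjTranspose]
    have : star s = s := by
      funext i; simp only [hsdef, Pi.star_apply]
      split <;> simp
    rw [this, Matrix.mul_assoc]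
  have hss : (fun i => s i * s i) = fun _ => (1 : ℂ) := by
    funext i; simp only [hsdef]; split <;> norm_num
  have hUU : U * Uᴴ = 1 := by
    rw [hUH, hUdef, conj_mul_conj W hW1, hss]
    simpa [Matrix.diagonal_one] using hW2
  have hUX : ((U * X).trace) = ∑ i, ((|e i| : ℝ) : ℂ) := by
    rw [hUdef, hXspec, conj_mul_conj W hW1, trace_conj W hW1]
    congr 1; funext i
    simp only [hsdef]
    rcases le_or_gt 0 (e i) with h | h
    · rw [if_pos h, abs_of_nonneg h, one_mul]
    · rw [if_neg (not_le.mpr h), abs_of_neg h]; push_cast; ring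
  have htn : traceNorm X = ∑ i, |e i| := by
    set M : Matrix n n ℂ := W * Matrix.diagonal (fun i => ((|e i| : ℝ) : ℂ)) * Wᴴ with hMdef
    have hMps : M.PosSemidef := by
      refine Matrix.PosSemidef.mul_mul_conjTranspose_same ?_ W
      rw [Matrix.posSemidef_diagonal_iff]
      intro i
      exact_mod_cast Complex.zero_le_real.mpr (abs_nonneg _)
    have hMsq : M ^ 2 = Xᴴ * X := by
      rw [hX.eq, pow_two, hMdef, conj_mul_conj W hW1]
      conv_rhs => rw [hXspec]
      rw [conj_mul_conj W hW1]
      have habs : (fun i => ((|e i| : ℝ) : ℂ) * ((|e i| : ℝ) : ℂ))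
          = (fun i => ((e i : ℝ) : ℂ) * ((e i : ℝ) : ℂ)) := by
        funext i
        rw [← Complex.ofReal_mul, ← Complex.ofReal_mul, abs_mul_abs_self]
      rw [habs]
    have hMeq : M = (Matrix.posSemidef_conjTranspose_mul_self X).sqrt :=
      hMps.eq_sqrt_of_sq_eq _ hMsq
    rw [traceNorm, ← hMeq, hMdef, trace_conj W hW1]
    push_cast
    simp
  refine ⟨U, hUU, ?_, ?_⟩
  · rw [hUH] at hUU ⊢; exact hUU
  · rw [htn, hUX]
    rw [Complex.re_sum]
    simp

end GentleAux

open GentleAux in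
theorem gentle_operator {n : Type*} [Fintype n] [DecidableEq n]
    (ρ Λ : Matrix n n ℂ) (l : ℝ)
    (hρ : ρ.PosSemidef) (hρ1 : ρ.trace.re ≤ 1)
    (hΛ : Λ.PosSemidef) (hΛ1 : (1 - Λ).PosSemidef)
    (h : 1 - l ≤ (ρ * Λ).trace.re) :
    traceNorm (ρ - hΛ.sqrt * ρ * hΛ.sqrt) ≤ Real.sqrt (8 * l) := by
  classical
  set S := hΛ.sqrt with hSdef
  set R := hρ.sqrt with hRdef
  have hSps : S.PosSemidef := hΛ.posSemidef_sqrt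
  have hSH : Sᴴ = S := hSps.1
  have hRH : Rᴴ = R := hρ.posSemidef_sqrt.1
  have hRR : R * R = ρ := hρ.sqrt_mul_self
  have hSS : S * S = Λ := hΛ.sqrt_mul_self
  set T : Matrix n n ℂ := 1 - S with hTdef
  have hTH : Tᴴ = T := by
    rw [hTdef, Matrix.conjTranspose_sub, Matrix.conjTranspose_one, hSH]
  -- eigen facts for Λ
  set V : Matrix n n ℂ := (hΛ.1.eigenvectorUnitary : Matrix n n ℂ) with hVdef
  set μ : n → ℝ := hΛ.1.eigenvalues with hμdef
  have hV1 : Vᴴ * V = 1 := by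
    rw [← Matrix.star_eq_conjTranspose]
    exact (Matrix.mem_unitaryGroup_iff').mp hΛ.1.eigenvectorUnitary.2
  have hΛspec : Λ = V * Matrix.diagonal (fun i => (μ i : ℂ)) * Vᴴ := by
    rw [← Matrix.star_eq_conjTranspose]
    exact hΛ.1.spectral_theorem
  have hμ0 : ∀ i, 0 ≤ μ i := hΛ.eigenvalues_nonneg
  have hdiagΛ : Vᴴ * Λ * V = Matrix.diagonal (fun i => (μ i : ℂ)) := by
    rw [← Matrix.star_eq_conjTranspose]
    rw [Matrix.star_eq_conjTranspose]
    conv_lhs => rw [hΛspec]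
    simp only [Matrix.mul_assoc]
    rw [hV1, Matrix.mul_one, ← Matrix.mul_assoc, hV1, Matrix.one_mul]
  have hμ1 : ∀ i, μ i ≤ 1 := by
    have hps : (Vᴴ * (1 - Λ) * V).PosSemidef := hΛ1.conjTranspose_mul_mul_same V
    have hcalc : Vᴴ * (1 - Λ) * V = Matrix.diagonal (fun i => 1 - (μ i : ℂ)) := by
      rw [Matrix.mul_sub, Matrix.mul_one, Matrix.sub_mul, hV1, hdiagΛ,
        ← Matrix.diagonal_one, Matrix.diagonal_sub]
    rw [hcalc, Matrix.posSemidef_diagonal_iff] at hps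
    intro i
    have h1 := hps i
    have h2 : ((1 - μ i : ℝ) : ℂ) = 1 - (μ i : ℂ) := by push_cast; ring
    rw [← h2, Complex.zero_le_real] at h1
    linarith
  have hSspec : S = V * Matrix.diagonal (fun i => (Real.sqrt (μ i) : ℂ)) * Vᴴ := by
    rw [hSdef, ← Matrix.star_eq_conjTranspose]
    rfl
  have hSmΛ : (S - Λ).PosSemidef := by
    have hdec : S - Λ = V * Matrix.diagonal (fun i => ((Real.sqrt (μ i) - μ i : ℝ) : ℂ)) * Vᴴ := by
      rw [hSspec]
      conv_lhs => rw [hΛspec]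
      rw [conj_sub, Matrix.diagonal_sub]
      congr 2
      funext i
      push_cast
      simp
    rw [hdec]
    refine Matrix.PosSemidef.mul_mul_conjTranspose_same ?_ V
    rw [Matrix.posSemidef_diagonal_iff]
    intro i
    refine Complex.zero_le_real.mpr (sub_nonneg.mpr ?_)
    have hms := Real.mul_self_sqrt (hμ0 i)
    have h1 : Real.sqrt (μ i) ≤ 1 := Real.sqrt_le_one.mpr (hμ1 i)
    nlinarith [Real.sqrt_nonneg (μ i)]
  -- trace bounds
  have hsub : (ρ * (1 - Λ)).trace = ρ.trace - (ρ * Λ).trace := by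
    rw [Matrix.mul_sub, Matrix.mul_one, Matrix.trace_sub]
  have hsubre : 0 ≤ ρ.trace.re - ((ρ * Λ).trace).re := by
    have h1 : 0 ≤ ((ρ * (1 - Λ)).trace).re := trace_mul_re_nonneg hρ hΛ1
    rwa [hsub, Complex.sub_re] at h1
  have hl0 : 0 ≤ l := by linarith
  have hρΛ1 : ((ρ * Λ).trace).re ≤ 1 := by linarith
  have hΛρ : (Λ * ρ).trace = (ρ * Λ).trace := Matrix.trace_mul_comm Λ ρ
  have hT2 : (((T * T) * ρ).trace).re ≤ l := by
    have hG : (1 - Λ) - T * T = (S - Λ) + (S - Λ) := by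
      rw [hTdef, ← hSS]; noncomm_ring
    have hGps : ((1 - Λ) - T * T).PosSemidef := hG ▸ hSmΛ.add hSmΛ
    have h3 : 0 ≤ ((((1 - Λ) - T * T) * ρ).trace).re := trace_mul_re_nonneg hGps hρ
    have h4 : (((1 - Λ) - T * T) * ρ).trace
        = ρ.trace - (Λ * ρ).trace - ((T * T) * ρ).trace := by
      rw [Matrix.sub_mul, Matrix.sub_mul, Matrix.one_mul, Matrix.trace_sub, Matrix.trace_sub]
    rw [h4, hΛρ] at h3
    simp only [Complex.sub_re] at h3
    linarith
  -- the Hermitian difference and its sign unitary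
  have hSρS : (S * ρ * S).PosSemidef := by
    have h1 := hρ.mul_mul_conjTranspose_same S
    rwa [hSH] at h1
  have hXh : (ρ - S * ρ * S).IsHermitian := hρ.1.sub hSρS.1
  obtain ⟨U, hUU, hU'U, hUle⟩ := traceNorm_le_sign hXh
  have hsplit : U * (ρ - S * ρ * S) = U * (T * ρ) + U * (S * ρ * T) := by
    rw [hTdef]; noncomm_ring
  have hTB : ((T * R)ᴴ * (T * R)).trace = ((T * T) * ρ).trace := by
    rw [Matrix.conjTranspose_mul, hRH, hTH,
      show R * T * (T * R) = R * ((T * T) * R) from by noncomm_ring,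
      Matrix.trace_mul_comm,
      show (T * T) * R * R = (T * T) * (R * R) from by noncomm_ring, hRR]
  have key1 : ((U * (T * ρ)).trace).re ≤ Real.sqrt l := by
    have e1 : U * (T * ρ) = (U * T * R) * R := by rw [← hRR]; noncomm_ring
    have e2 : R * (U * T * R) = (Uᴴ * R)ᴴ * (T * R) := by
      rw [Matrix.conjTranspose_mul, hRH, Matrix.conjTranspose_conjTranspose]
      noncomm_ring
    rw [e1, Matrix.trace_mul_comm, e2]
    have hA : ((Uᴴ * R)ᴴ * (Uᴴ * R)).trace = ρ.trace := by
      rw [Matrix.conjTranspose_mul, hRH, Matrix.conjTranspose_conjTranspose,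
        show R * U * (Uᴴ * R) = R * (U * Uᴴ) * R from by noncomm_ring,
        hUU, Matrix.mul_one, hRR]
    calc (((Uᴴ * R)ᴴ * (T * R)).trace).re
        ≤ Real.sqrt (((Uᴴ * R)ᴴ * (Uᴴ * R)).trace).re
            * Real.sqrt (((T * R)ᴴ * (T * R)).trace).re := trace_CS _ _
      _ ≤ 1 * Real.sqrt l := by
          apply mul_le_mul
          · rw [hA]; exact Real.sqrt_le_one.mpr hρ1
          · rw [hTB]; exact Real.sqrt_le_sqrt hT2
          · exact Real.sqrt_nonneg _
          · norm_num
      _ = Real.sqrt l := one_mul _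
  have key2 : ((U * (S * ρ * T)).trace).re ≤ Real.sqrt l := by
    have e1 : U * (S * ρ * T) = (U * S * R) * (R * T) := by rw [← hRR]; noncomm_ring
    have e2 : (R * T) * (U * S * R) = (T * R)ᴴ * (U * (S * R)) := by
      rw [Matrix.conjTranspose_mul, hRH, hTH]
      noncomm_ring
    rw [e1, Matrix.trace_mul_comm, e2]
    have hB : ((U * (S * R))ᴴ * (U * (S * R))).trace = (ρ * Λ).trace := by
      rw [Matrix.conjTranspose_mul,
        show (S * R)ᴴ * Uᴴ * (U * (S * R)) = (S * R)ᴴ * (Uᴴ * U) * (S * R) from by noncomm_ring,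
        hU'U, Matrix.mul_one, Matrix.conjTranspose_mul, hRH, hSH,
        show R * S * (S * R) = R * ((S * S) * R) from by noncomm_ring,
        Matrix.trace_mul_comm,
        show (S * S) * R * R = (S * S) * (R * R) from by noncomm_ring, hRR, hSS, hΛρ]
    calc (((T * R)ᴴ * (U * (S * R))).trace).re
        ≤ Real.sqrt (((T * R)ᴴ * (T * R)).trace).re
            * Real.sqrt (((U * (S * R))ᴴ * (U * (S * R))).trace).re := trace_CS _ _
      _ ≤ Real.sqrt l * 1 := by
          apply mul_le_mul
          · rw [hTB]; exact Real.sqrt_le_sqrt hT2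
          · rw [hB]; exact Real.sqrt_le_one.mpr hρΛ1
          · exact Real.sqrt_nonneg _
          · exact Real.sqrt_nonneg _
      _ = Real.sqrt l := mul_one _
  calc traceNorm (ρ - S * ρ * S) ≤ ((U * (ρ - S * ρ * S)).trace).re := hUle
    _ = ((U * (T * ρ)).trace).re + ((U * (S * ρ * T)).trace).re := by
        rw [hsplit, Matrix.trace_add, Complex.add_re]
    _ ≤ Real.sqrt l + Real.sqrt l := add_le_add key1 key2
    _ ≤ Real.sqrt (8 * l) := by
        have hsq : (Real.sqrt l + Real.sqrt l) ^ 2 ≤ 8 * l := by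
          have := Real.sq_sqrt hl0
          nlinarith [Real.sqrt_nonneg l]
        calc Real.sqrt l + Real.sqrt l
            = Real.sqrt ((Real.sqrt l + Real.sqrt l) ^ 2) :=
              (Real.sqrt_sq (by positivity)).symm
          _ ≤ Real.sqrt (8 * l) := Real.sqrt_le_sqrt hsq
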